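/- Let p : ℝ → ℝ be a function satisfying (i) monotonicity: for all t₁, t₂, t₃ ∈ ℝ, |t₁ − t₂| > |t₁ − t₃| if and only if |p(t₁) − p(t₂)| > |p(t₁) − p(t₃)|, and (ii) translation invariance: for all t₁, t₂, l ∈ ℝ, |p(t₁ + l) − p(t₁)| = |p(t₂ + l) − p(t₂)|. Then p is linear: there exist k, b ∈ ℝ such that p(x) = k·x + b for all x ∈ ℝ. -/

import Mathlib

lemma additive_monotone_linear (G : ℝ → ℝ) (hadd : ∀ x y, G (x + y) = G x + G y)
    (hm : Monotone G) (hpos : 0 < G 1) : ∀ x, G x = G 1 * x := by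
  set φ : ℝ →+ ℝ := AddMonoidHom.mk' G hadd with hφ
  have hq : ∀ q : ℚ, G (q : ℝ) = (q : ℝ) * G 1 := by
    intro q
    have h := map_ratCast_smul φ ℚ ℚ q (1 : ℝ)
    simpa [Rat.smul_def, hφ] using h
  intro x
  refine le_antisymm ?_ ?_
  · by_contra h
    push_neg at h
    have hx : x < G x / G 1 := (lt_div_iff₀ hpos).2 (by nlinarith)
    obtain ⟨q, hq1, hq2⟩ := exists_rat_btwn hx
    have h1 : G x ≤ G q := hm hq1.le
    have h2 : (q : ℝ) * G 1 < G x := by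
      have := (lt_div_iff₀ hpos).1 hq2
      nlinarith
    rw [hq q] at h1; linarith
  · by_contra h
    push_neg at h
    have hx : G x / G 1 < x := (div_lt_iff₀ hpos).2 (by nlinarith)
    obtain ⟨q, hq1, hq2⟩ := exists_rat_btwn hx
    have h1 : G q ≤ G x := hm hq2.le
    have h2 : G x < (q : ℝ) * G 1 := by
      have := (div_lt_iff₀ hpos).1 hq1
      nlinarith
    rw [hq q] at h1; linarith

theorem linear_positional_embedding
    (p : ℝ → ℝ)
    (hmono : ∀ t₁ t₂ t₃ : ℝ, |t₁ - t₂| > |t₁ - t₃| ↔ |p t₁ - p t₂| > |p t₁ - p t₃|)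
    (htrans : ∀ t₁ t₂ l : ℝ, |p (t₁ + l) - p t₁| = |p (t₂ + l) - p t₂|) :
    ∃ k b : ℝ, ∀ x : ℝ, p x = k * x + b := by
  set F : ℝ → ℝ := fun l => |p l - p 0| with hF
  -- distance depends only on the difference
  have habs : ∀ a c : ℝ, |p a - p c| = F (a - c) := by
    intro a c
    have h := htrans c 0 (a - c)
    simpa using h
  have hFnn : ∀ l, 0 ≤ F l := fun l => abs_nonneg _
  -- F reflects the order of absolute values
  have hFlt : ∀ u v : ℝ, |u| > |v| ↔ F u > F v := by
    intro u v
    have h := hmono u 0 (u - v)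
    rw [habs u 0, habs u (u - v)] at h
    simpa using h
  have hF0 : F 0 = 0 := by simp [hF]
  have hFpos : ∀ l : ℝ, l ≠ 0 → 0 < F l := by
    intro l hl
    have : |l| > |(0:ℝ)| := by simpa using abs_pos.2 hl
    have := (hFlt l 0).1 this
    rwa [hF0] at this
  -- consecutive increments have the same sign
  have step1 : ∀ t a b : ℝ, 0 < a → 0 < b →
      0 < (p (t + a + b) - p (t + a)) * (p (t + a) - p t) := by
    intro t a b ha hb
    set X := p (t + a + b) - p (t + a) with hX
    set Y := p (t + a) - p t with hY
    have hXa : |X| = F b := by rw [hX, habs]; ring_nf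
    have hYa : |Y| = F a := by rw [hY, habs]; ring_nf
    have hXYa : |X + Y| = F (a + b) := by
      have : X + Y = p (t + a + b) - p t := by rw [hX, hY]; ring
      rw [this, habs]; ring_nf
    have h1 : F (a + b) > F a := (hFlt (a + b) a).1 (by rw [abs_of_pos (by linarith), abs_of_pos ha]; linarith)
    have h2 : F (a + b) > F b := (hFlt (a + b) b).1 (by rw [abs_of_pos (by linarith), abs_of_pos hb]; linarith)
    by_contra h
    push_neg at h
    rcases mul_nonpos_iff.mp h with ⟨hX0, hY0⟩ | ⟨hX0, hY0⟩
    · rw [abs_of_nonneg hX0] at hXa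
      rw [abs_of_nonpos hY0] at hYa
      rcases abs_cases (X + Y) with ⟨he, _⟩ | ⟨he, _⟩ <;>
        (rw [he] at hXYa; linarith)
    · rw [abs_of_nonpos hX0] at hXa
      rw [abs_of_nonneg hY0] at hYa
      rcases abs_cases (X + Y) with ⟨he, _⟩ | ⟨he, _⟩ <;>
        (rw [he] at hXYa; linarith)
  -- increments from the same base point have the same sign
  have ray : ∀ w a b : ℝ, 0 < a → 0 < b →
      0 < (p (w + a) - p w) * (p (w + b) - p w) := by
    have key : ∀ w a b : ℝ, 0 < a → a < b →
        0 < (p (w + a) - p w) * (p (w + b) - p w) := by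
      intro w a b ha hab
      have h := step1 w a (b - a) ha (by linarith)
      have he : w + a + (b - a) = w + b := by ring
      rw [he] at h
      set X := p (w + b) - p (w + a)
      set Y := p (w + a) - p w
      have hXY : p (w + b) - p w = X + Y := by ring
      rw [hXY]
      nlinarith [mul_self_nonneg Y]
    intro w a b ha hb
    rcases lt_trichotomy a b with h | h | h
    · exact key w a b ha h
    · subst h
      have : p (w + a) - p w ≠ 0 := by
        intro hc
        have := hFpos a (by linarith)
        have h2 : |p (w + a) - p w| = F a := by rw [habs]; ring_nf
        rw [hc] at h2; simp at h2; linarith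
      have := mul_self_pos.2 this
      linarith [this]
    · have := key w b a hb h
      linarith [this]
  -- any two positive increments have the same sign
  have cross : ∀ t l u m : ℝ, 0 < l → 0 < m →
      0 < (p (t + l) - p t) * (p (u + m) - p u) := by
    intro t l u m hl hm
    set w := min t u - 1 with hw
    have hwt : 0 < t - w := by
      have := min_le_left t u; simp only [hw]; linarith
    have hwu : 0 < u - w := by
      have := min_le_right t u; simp only [hw]; linarith
    have h1 := step1 w (t - w) l hwt hl
    have h2 := step1 w (u - w) m hwu hm
    have e1 : w + (t - w) = t := by ring
    rw [e1] at h1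
    have e2 : w + (u - w) = u := by ring
    rw [e2] at h2
    have h3 := ray w (t - w) (u - w) hwt hwu
    rw [e1, e2] at h3
    set A := p (t + l) - p t
    set B := p (u + m) - p u
    set C := p t - p w
    set D := p u - p w
    rcases mul_pos_iff.mp h1 with ⟨hA, hC⟩ | ⟨hA, hC⟩ <;>
      rcases mul_pos_iff.mp h2 with ⟨hB, hD⟩ | ⟨hB, hD⟩ <;>
      rcases mul_pos_iff.mp h3 with ⟨hC', hD'⟩ | ⟨hC', hD'⟩ <;>
      first
        | exact mul_pos hA hB
        | exact mul_pos_of_neg_of_neg hA hB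
        | linarith
  -- extract the global sign
  have hA1 : p (0 + 1) - p 0 ≠ 0 := by
    intro hc
    have h2 : |p (0 + 1) - p 0| = F 1 := by rw [habs]; ring_nf
    rw [hc] at h2; simp at h2
    have := hFpos 1 one_ne_zero
    linarith
  obtain ⟨s, hs2, hD⟩ : ∃ s : ℝ, s * s = 1 ∧ ∀ t l : ℝ, 0 < l → p (t + l) - p t = s * F l := by
    rcases hA1.lt_or_gt with hneg | hpos
    · refine ⟨-1, by norm_num, fun t l hl => ?_⟩
      have hc := cross t l 0 1 hl one_pos
      have habs' : |p (t + l) - p t| = F l := by rw [habs]; ring_nf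
      have hlt : p (t + l) - p t < 0 := by
        rcases mul_pos_iff.mp hc with ⟨h1, h2⟩ | ⟨h1, h2⟩
        · linarith
        · exact h1
      rw [abs_of_neg hlt] at habs'
      linarith
    · refine ⟨1, by norm_num, fun t l hl => ?_⟩
      have hc := cross t l 0 1 hl one_pos
      have habs' : |p (t + l) - p t| = F l := by rw [habs]; ring_nf
      have hlt : 0 < p (t + l) - p t := by
        rcases mul_pos_iff.mp hc with ⟨h1, h2⟩ | ⟨h1, h2⟩
        · exact h1
        · linarith
      rw [abs_of_pos hlt] at habs'
      linarith
  -- the normalized function G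
  set G : ℝ → ℝ := fun x => s * (p x - p 0) with hG
  have hGdiff : ∀ u v : ℝ, u < v → G v - G u = F (v - u) := by
    intro u v huv
    have h := hD u (v - u) (by linarith)
    have e : u + (v - u) = v := by ring
    rw [e] at h
    simp only [hG]
    calc s * (p v - p 0) - s * (p u - p 0) = s * (p v - p u) := by ring
    _ = s * (s * F (v - u)) := by rw [h]
    _ = F (v - u) := by rw [← mul_assoc, hs2, one_mul]
  have hGmono : Monotone G := by
    intro u v huv
    rcases eq_or_lt_of_le huv with h | h
    · rw [h]
    · have := hGdiff u v h
      have := hFnn (v - u)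
      linarith
  have hG0 : G 0 = 0 := by simp [hG]
  have hGadd : ∀ x y : ℝ, G (x + y) = G x + G y := by
    intro x y
    rcases lt_trichotomy y 0 with hy | hy | hy
    · have h1 := hGdiff (x + y) x (by linarith)
      have h2 := hGdiff y 0 hy
      rw [hG0] at h2
      have e : x - (x + y) = 0 - y := by ring
      rw [e] at h1
      linarith
    · rw [hy]; rw [hG0]; ring_nf
    · have h1 := hGdiff x (x + y) (by linarith)
      have h2 := hGdiff 0 y hy
      rw [hG0] at h2
      have e : x + y - x = y - 0 := by ring
      rw [e] at h1
      linarith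
  have hG1 : 0 < G 1 := by
    have h := hGdiff 0 1 one_pos
    rw [hG0] at h
    have := hFpos (1 - 0) (by norm_num)
    linarith
  have hlin := additive_monotone_linear G hGadd hGmono hG1
  refine ⟨s * G 1, p 0, fun x => ?_⟩
  have h := hlin x
  have hG1v : G 1 = s * (p 1 - p 0) := rfl
  simp only [hG] at h
  rw [hG1v]
  linear_combination s * h - (p x - p 0) * hs2
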